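/- arXiv:1501.02109 — 3 statements merged into one kernel-verified Lean document; each statement's English description precedes it below -/
import Mathlib

section
/- Let n ∈ ℕ, S = n/2, and P, M ≥ 0. Define f(t) = Σ_{a=−S}^{S} e^{at}, where the index a runs over the n+1 values −S, −S+1, …, S (increasing in integer steps), and define z̃(P,M) = ¼·Σ_{a=−S}^{S−1} ( S(S+1) − a(a+1) )·[ e^{(a+1)P + aM} + e^{aP + (a+1)M} ], where the index a runs over the n values −S, −S+1, …, S−1 (increasing in integer steps). Then z̃(P,M) ≤ (1/6)·S·(S+1)·(2S+1)·f(P+M)·( e^{−P} + e^{−M} ); in particular z̃(P,M)/f(P+M) ≤ (1/3)·S·(S+1)·(2S+1)·max(e^{−P}, e^{−M}). -/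
open Finset Real

lemma sum_range_cast (n : ℕ) : ∑ k ∈ Finset.range n, (k : ℝ) = n * (n - 1) / 2 := by
  induction n with
  | zero => simp
  | succ m ih => rw [Finset.sum_range_succ, ih]; push_cast; ring

lemma sum_range_sq_cast (n : ℕ) :
    ∑ k ∈ Finset.range n, (k : ℝ) ^ 2 = n * (n - 1) * (2 * n - 1) / 6 := by
  induction n with
  | zero => simp
  | succ m ih => rw [Finset.sum_range_succ, ih]; push_cast; ring

/-- with `S = n/2`, `P, M ≥ 0`, `f(t) = ∑_{a=-S}^{S} e^{at}` (the index `a`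
running over the `n+1` values `-S, …, S`) and
`z̃(P,M) = ¼ ∑_{a=-S}^{S-1} (S(S+1) − a(a+1)) (e^{(a+1)P + aM} + e^{aP + (a+1)M})`
(the index `a` running over the `n` values `-S, …, S-1`), one has
`z̃(P,M) ≤ (1/6)·S·(S+1)·(2S+1)·f(P+M)·(e^{−P} + e^{−M})` and in particular
`z̃(P,M)/f(P+M) ≤ (1/3)·S·(S+1)·(2S+1)·max(e^{−P}, e^{−M})`. -/
theorem activity_ratio_bound (n : ℕ) (S : ℝ) (hS : S = n / 2)
    (P M : ℝ) (hP : 0 ≤ P) (hM : 0 ≤ M)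
    (f : ℝ → ℝ)
    (hf : ∀ t : ℝ, f t = ∑ k ∈ Finset.range (n + 1), Real.exp (((k : ℝ) - S) * t))
    (ztilde : ℝ)
    (hz : ztilde = (1 / 4) * ∑ k ∈ Finset.range n,
        (S * (S + 1) - ((k : ℝ) - S) * (((k : ℝ) - S) + 1)) *
          (Real.exp ((((k : ℝ) - S) + 1) * P + ((k : ℝ) - S) * M)
            + Real.exp (((k : ℝ) - S) * P + (((k : ℝ) - S) + 1) * M))) :
    ztilde ≤ (1 / 6) * S * (S + 1) * (2 * S + 1) * f (P + M)
        * (Real.exp (-P) + Real.exp (-M))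
    ∧ ztilde / f (P + M)
        ≤ (1 / 3) * S * (S + 1) * (2 * S + 1) * max (Real.exp (-P)) (Real.exp (-M)) := by
  have hSnn : 0 ≤ S := by rw [hS]; positivity
  set C : ℝ := Real.exp (S * (P + M)) * (Real.exp (-P) + Real.exp (-M)) with hC
  -- termwise bound
  have hterm : ∀ k ∈ Finset.range n,
      (S * (S + 1) - ((k : ℝ) - S) * (((k : ℝ) - S) + 1)) *
          (Real.exp ((((k : ℝ) - S) + 1) * P + ((k : ℝ) - S) * M)
            + Real.exp (((k : ℝ) - S) * P + (((k : ℝ) - S) + 1) * M))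
        ≤ (S * (S + 1) - ((k : ℝ) - S) * (((k : ℝ) - S) + 1)) * C := by
    intro k hk
    have hk' : (k : ℕ) < n := Finset.mem_range.mp hk
    have hkr : (k : ℝ) + 1 ≤ n := by exact_mod_cast Nat.succ_le_of_lt hk'
    have hcnn : 0 ≤ S * (S + 1) - ((k : ℝ) - S) * (((k : ℝ) - S) + 1) := by
      have : S * (S + 1) - ((k : ℝ) - S) * (((k : ℝ) - S) + 1)
          = ((k : ℝ) + 1) * ((n : ℝ) - k) := by subst hS; ring
      rw [this]
      have : (0:ℝ) ≤ (n : ℝ) - k := by linarith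
      positivity
    apply mul_le_mul_of_nonneg_left _ hcnn
    have ha : ((k : ℝ) - S) + 1 ≤ S := by rw [hS] at *; linarith
    have h1 : Real.exp ((((k : ℝ) - S) + 1) * P + ((k : ℝ) - S) * M)
        ≤ Real.exp (S * (P + M)) * Real.exp (-M) := by
      rw [← Real.exp_add]
      apply Real.exp_le_exp.mpr
      have := mul_le_mul_of_nonneg_right ha (by linarith : (0:ℝ) ≤ P + M)
      nlinarith
    have h2 : Real.exp (((k : ℝ) - S) * P + (((k : ℝ) - S) + 1) * M)
        ≤ Real.exp (S * (P + M)) * Real.exp (-P) := by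
      rw [← Real.exp_add]
      apply Real.exp_le_exp.mpr
      have := mul_le_mul_of_nonneg_right ha (by linarith : (0:ℝ) ≤ P + M)
      nlinarith
    rw [hC]; nlinarith [h1, h2]
  have hcsum : ∑ k ∈ Finset.range n,
      (S * (S + 1) - ((k : ℝ) - S) * (((k : ℝ) - S) + 1))
      = (2 / 3) * S * (S + 1) * (2 * S + 1) := by
    have : ∀ k ∈ Finset.range n,
        S * (S + 1) - ((k : ℝ) - S) * (((k : ℝ) - S) + 1)
          = 2 * S + (2 * S - 1) * (k : ℝ) - (k : ℝ) ^ 2 := by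
      intro k _; ring
    rw [Finset.sum_congr rfl this]
    simp only [Finset.sum_sub_distrib, Finset.sum_add_distrib, Finset.sum_const,
      ← Finset.mul_sum, sum_range_cast, sum_range_sq_cast, Finset.card_range,
      nsmul_eq_mul]
    subst hS
    ring
  have key : ztilde ≤ (1 / 6) * S * (S + 1) * (2 * S + 1) * Real.exp (S * (P + M))
      * (Real.exp (-P) + Real.exp (-M)) := by
    rw [hz]
    calc (1 / 4) * ∑ k ∈ Finset.range n,
        (S * (S + 1) - ((k : ℝ) - S) * (((k : ℝ) - S) + 1)) *
          (Real.exp ((((k : ℝ) - S) + 1) * P + ((k : ℝ) - S) * M)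
            + Real.exp (((k : ℝ) - S) * P + (((k : ℝ) - S) + 1) * M))
        ≤ (1 / 4) * ∑ k ∈ Finset.range n,
            (S * (S + 1) - ((k : ℝ) - S) * (((k : ℝ) - S) + 1)) * C := by
          apply mul_le_mul_of_nonneg_left (Finset.sum_le_sum hterm) (by norm_num)
      _ = (1 / 6) * S * (S + 1) * (2 * S + 1) * Real.exp (S * (P + M))
            * (Real.exp (-P) + Real.exp (-M)) := by
          rw [← Finset.sum_mul, hcsum, hC]; ring
  have hfge : Real.exp (S * (P + M)) ≤ f (P + M) := by
    rw [hf]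
    have hmem : n ∈ Finset.range (n + 1) := Finset.self_mem_range_succ n
    have := Finset.single_le_sum
      (f := fun k : ℕ => Real.exp (((k : ℝ) - S) * (P + M)))
      (fun i _ => (Real.exp_pos _).le) hmem
    have heq : ((n : ℝ) - S) = S := by rw [hS]; ring
    rw [heq] at this
    exact this
  have hcoef : 0 ≤ (1 / 6) * S * (S + 1) * (2 * S + 1) * (Real.exp (-P) + Real.exp (-M)) := by
    positivity
  have part1 : ztilde ≤ (1 / 6) * S * (S + 1) * (2 * S + 1) * f (P + M)
      * (Real.exp (-P) + Real.exp (-M)) := by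
    calc ztilde ≤ (1 / 6) * S * (S + 1) * (2 * S + 1) * Real.exp (S * (P + M))
          * (Real.exp (-P) + Real.exp (-M)) := key
      _ ≤ (1 / 6) * S * (S + 1) * (2 * S + 1) * f (P + M)
          * (Real.exp (-P) + Real.exp (-M)) := by nlinarith [hfge, hcoef]
  refine ⟨part1, ?_⟩
  have hfpos : 0 < f (P + M) := by
    rw [hf]
    exact Finset.sum_pos (fun i _ => Real.exp_pos _) (Finset.nonempty_range_add_one)
  rw [div_le_iff₀ hfpos]
  have hmax1 : Real.exp (-P) ≤ max (Real.exp (-P)) (Real.exp (-M)) := le_max_left _ _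
  have hmax2 : Real.exp (-M) ≤ max (Real.exp (-P)) (Real.exp (-M)) := le_max_right _ _
  have hKnn : 0 ≤ (1 / 6) * S * (S + 1) * (2 * S + 1) * f (P + M) := by positivity
  nlinarith [part1, hKnn, hmax1, hmax2]
end

section
/- Let N ≥ 1 be an integer and q ∈ [0,1]. Let μ be the probability measure on {0,1}^N that assigns mass 1−q to the all-ones configuration and mass q to the all-zeros configuration, and let ν be the product measure on {0,1}^N under which the coordinates are i.i.d. Bernoulli with ν(coordinate = 1) = 1 − q^{1/N}. Then μ stochastically dominates ν: for every function F : {0,1}^N → ℝ that is nondecreasing with respect to the coordinatewise partial order, ∫ F dν ≤ ∫ F dμ. -/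
/-- the measure on `{0,1}^N` putting mass `1−q` on the all-ones
configuration and mass `q` on the all-zeros configuration stochastically dominates the
product of i.i.d. Bernoulli measures with success probability `1 − q^{1/N}`:
for every nondecreasing `F : {0,1}^N → ℝ` (coordinatewise order, `true = 1 ≥ 0 = false`),
`∫ F dν = ∑_ξ (∏_k weight) F(ξ) ≤ q·F(all zeros) + (1−q)·F(all ones) = ∫ F dμ`. -/
theorem iid_dominated_by_fully_correlated
    (N : ℕ) (hN : 1 ≤ N) (q : ℝ) (hq0 : 0 ≤ q) (hq1 : q ≤ 1)
    (F : (Fin N → Bool) → ℝ) (hF : Monotone F) :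
    ∑ ξ : Fin N → Bool,
        (∏ k : Fin N, if ξ k then 1 - q ^ ((N : ℝ)⁻¹) else q ^ ((N : ℝ)⁻¹)) * F ξ
      ≤ q * F (fun _ => false) + (1 - q) * F (fun _ => true) := by
  set p : ℝ := q ^ ((N : ℝ)⁻¹) with hp
  have hNpos : (0:ℝ) < N := by exact_mod_cast hN
  have hp0 : 0 ≤ p := Real.rpow_nonneg hq0 _
  have hp1 : p ≤ 1 := Real.rpow_le_one hq0 hq1 (by positivity)
  set w : (Fin N → Bool) → ℝ := fun ξ => ∏ k : Fin N, if ξ k then 1 - p else p with hw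
  have hwnn : ∀ ξ, 0 ≤ w ξ := fun ξ =>
    Finset.prod_nonneg fun k _ => by split <;> linarith
  -- weight of all-zeros configuration
  have hw0 : w (fun _ => false) = q := by
    simp only [hw, if_neg Bool.false_ne_true]
    simp only [Bool.false_eq_true, if_false, Finset.prod_const, Finset.card_univ,
      Fintype.card_fin]
    rw [hp, ← Real.rpow_natCast (q ^ ((N:ℝ)⁻¹)) N, ← Real.rpow_mul hq0]
    rw [inv_mul_cancel₀ (ne_of_gt hNpos), Real.rpow_one]
  -- total mass is 1
  have htot : ∑ ξ : Fin N → Bool, w ξ = 1 := by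
    have := Finset.prod_univ_sum (fun _ : Fin N => (Finset.univ : Finset Bool))
      (fun _ b => if b then 1 - p else p)
    rw [Fintype.piFinset_univ] at this
    rw [hw, ← this]
    simp
  -- split off the all-false configuration
  have hmem : (fun _ : Fin N => false) ∈ (Finset.univ : Finset (Fin N → Bool)) :=
    Finset.mem_univ _
  rw [← Finset.add_sum_erase _ _ hmem]
  have hrest : ∑ ξ ∈ Finset.univ.erase (fun _ : Fin N => false), w ξ * F ξ
      ≤ (1 - q) * F (fun _ => true) := by
    have h1 : ∑ ξ ∈ Finset.univ.erase (fun _ : Fin N => false), w ξ * F ξ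
        ≤ ∑ ξ ∈ Finset.univ.erase (fun _ : Fin N => false), w ξ * F (fun _ => true) := by
      refine Finset.sum_le_sum fun ξ _ => ?_
      exact mul_le_mul_of_nonneg_left (hF fun k => Bool.le_true _) (hwnn ξ)
    have h2 : ∑ ξ ∈ Finset.univ.erase (fun _ : Fin N => false), w ξ = 1 - q := by
      have := Finset.add_sum_erase _ w hmem
      rw [htot, hw0] at this
      linarith
    calc ∑ ξ ∈ Finset.univ.erase (fun _ : Fin N => false), w ξ * F ξ
        ≤ ∑ ξ ∈ Finset.univ.erase (fun _ : Fin N => false), w ξ * F (fun _ => true) := h1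
      _ = (1 - q) * F (fun _ => true) := by rw [← Finset.sum_mul, h2]
  show w (fun _ => false) * F (fun _ => false) +
      ∑ ξ ∈ Finset.univ.erase (fun _ : Fin N => false), w ξ * F ξ ≤ _
  rw [hw0]
  linarith [hrest]
end

section
/- There exists κ > 0, depending only on the dimension d, such that for every p > 1 − κ there exist constants φ > 0 and c₁, c₂ > 0, depending only on p and d, such that for every integer N ≥ 1 and every x ∈ A: P( T(x) < φ‖x‖₁ ) ≤ c₁ e^{−c₂‖x‖₁}. Here the probability is over an i.i.d. family η = (η(i))_{i∈Ξ} of {0,1}-valued random variables with P(η(i)=1) = p, and the constants are uniform in N. -/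
open MeasureTheory
open scoped ENNReal

/-- The even sublattice `A = {x ∈ ℤ^d : x₁ + ⋯ + x_d even}`. -/
def EvenLattice (d : ℕ) : Type := {x : Fin d → ℤ // Even (∑ i, x i)}

instance (d : ℕ) : DecidableEq (EvenLattice d) := fun x y =>
  decidable_of_iff _ Subtype.ext_iff.symm

/-- Adjacency (next-nearest neighbours) on the even sublattice:
`y = x ± e_i ± e_j`, i.e. `x ≠ y` and `∑ i |x_i − y_i| = 2`. -/
def adjA {d : ℕ} (x y : EvenLattice d) : Prop :=
  x ≠ y ∧ (∑ i, |x.1 i - y.1 i|) = 2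

/-- Adjacency on `Ξ = A × ℤ/Nℤ`: either the same site and time-indices differing by
`±1 (mod N)`, or the same time-index and adjacent sites. -/
def adjXi {d N : ℕ} (i j : EvenLattice d × ZMod N) : Prop :=
  (i.1 = j.1 ∧ (j.2 = i.2 + 1 ∨ j.2 = i.2 - 1)) ∨ (i.2 = j.2 ∧ adjA i.1 j.1)

/-- The origin of the even sublattice. -/
def originA (d : ℕ) : EvenLattice d := ⟨fun _ => 0, by simp⟩

/-- The passage time from the origin `(0,0)` to `(x,0)`: the infimum over all finite
paths `π` in the graph `Ξ` of the sum of `η` over all vertices visited by `π`. -/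
noncomputable def passageTime {d N : ℕ} (η : EvenLattice d × ZMod N → Bool)
    (x : EvenLattice d) : ℝ≥0∞ :=
  ⨅ (m : ℕ) (π : Fin (m + 1) → EvenLattice d × ZMod N)
    (_ : π 0 = (originA d, 0)) (_ : π (Fin.last m) = (x, 0))
    (_ : ∀ j : Fin m, adjXi (π j.castSucc) (π j.succ)),
    ∑ i ∈ Finset.image π Finset.univ, (if η i then 1 else 0 : ℝ≥0∞)

namespace FPP

abbrev Xi (d N : ℕ) := EvenLattice d × ZMod N

variable {d N : ℕ}

lemma adjA_symm {x y : EvenLattice d} (h : adjA x y) : adjA y x := by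
  refine ⟨h.1.symm, ?_⟩
  rw [← h.2]
  exact Finset.sum_congr rfl fun i _ => abs_sub_comm _ _

lemma adjXi_symm {i j : Xi d N} (h : adjXi i j) : adjXi j i := by
  rcases h with ⟨h1, h2 | h2⟩ | ⟨h1, h2⟩
  · exact Or.inl ⟨h1.symm, Or.inr (by rw [h2]; ring)⟩
  · exact Or.inl ⟨h1.symm, Or.inl (by rw [h2]; ring)⟩
  · exact Or.inr ⟨h1.symm, adjA_symm h2⟩

def G (d N : ℕ) : SimpleGraph (Xi d N) where
  Adj a b := adjXi a b ∧ a ≠ b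
  symm := ⟨fun _ _ h => ⟨adjXi_symm h.1, h.2.symm⟩⟩
  loopless := ⟨fun _ h => h.2 rfl⟩

abbrev Step (d : ℕ) := (Fin d → Fin 5) ⊕ Bool

instance : Inhabited (Step d) := ⟨Sum.inr true⟩

def decode (k : Fin 5) : ℤ := (k : ℤ) - 2

lemma even_sum_of_even_sum_abs {v : Fin d → ℤ} (h : Even (∑ i, |v i|)) :
    Even (∑ i, v i) := by
  rw [Int.even_iff] at h ⊢
  rw [Finset.sum_int_mod] at h ⊢
  rw [← h]
  congr 1
  refine Finset.sum_congr rfl fun i _ => ?_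
  rcases abs_choice (v i) with hc | hc
  · rw [hc]
  · rw [hc, Int.neg_emod_two]

def applyStep (s : Step d) (a : Xi d N) : Xi d N :=
  match s with
  | Sum.inr b => (a.1, a.2 + if b then 1 else -1)
  | Sum.inl f =>
    if h : (∑ i, |decode (f i)|) = 2 then
      (⟨fun i => a.1.1 i + decode (f i), by
        rw [Finset.sum_add_distrib]
        exact (a.1.2).add (even_sum_of_even_sum_abs (h ▸ even_two))⟩, a.2)
    else a

lemma exists_step {a b : Xi d N} (h : adjXi a b) : ∃ s : Step d, applyStep s a = b := by
  rcases h with ⟨h1, h2 | h2⟩ | ⟨h1, h2⟩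
  · exact ⟨Sum.inr true, by simp [applyStep, Prod.ext_iff, h1, h2]⟩
  · exact ⟨Sum.inr false, by simp [applyStep, Prod.ext_iff, h1, h2, sub_eq_add_neg]⟩
  · -- spatial step
    set v : Fin d → ℤ := fun i => b.1.1 i - a.1.1 i with hv
    have hsum : (∑ i, |v i|) = 2 := by
      rw [← h2.2]
      exact Finset.sum_congr rfl fun i _ => abs_sub_comm _ _
    have hb : ∀ i, |v i| ≤ 2 := by
      intro i
      rw [← hsum]
      exact Finset.single_le_sum (fun j _ => abs_nonneg (v j)) (Finset.mem_univ i)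
    have hlow : ∀ i, (0:ℤ) ≤ v i + 2 := fun i => by have := (abs_le.mp (hb i)).1; omega
    have hhigh : ∀ i, (v i + 2).toNat < 5 := fun i => by
      have := (abs_le.mp (hb i)).2; omega
    refine ⟨Sum.inl (fun i => ⟨(v i + 2).toNat, hhigh i⟩), ?_⟩
    have hdec : ∀ i, decode (⟨(v i + 2).toNat, hhigh i⟩ : Fin 5) = v i := by
      intro i
      simp only [decode, Fin.val_mk]
      rw [Int.toNat_of_nonneg (hlow i)]
      ring
    have hcond : (∑ i, |decode ((fun i => (⟨(v i + 2).toNat, hhigh i⟩ : Fin 5)) i)|) = 2 :=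
      (Finset.sum_congr rfl fun i _ => by rw [hdec i]).trans hsum
    simp only [applyStep, hcond, dif_pos]
    refine Prod.ext ?_ h1
    refine Subtype.ext (funext fun i => ?_)
    show a.1.1 i + decode ⟨(v i + 2).toNat, hhigh i⟩ = b.1.1 i
    rw [hdec i]
    simp only [hv]
    ring

def seq (a : Xi d N) (σ : ℕ → Step d) : ℕ → Xi d N
  | 0 => a
  | k + 1 => applyStep (σ k) (seq a σ k)

lemma seq_congr {a : Xi d N} {σ τ : ℕ → Step d} :
    ∀ k, (∀ j, j < k → σ j = τ j) → seq a σ k = seq a τ k := by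
  intro k
  induction k with
  | zero => intro; rfl
  | succ k ih =>
    intro h
    show applyStep (σ k) (seq a σ k) = applyStep (τ k) (seq a τ k)
    rw [ih (fun j hj => h j (by omega)), h k (by omega)]

lemma seq_shift (a : Xi d N) (σ : ℕ → Step d) :
    ∀ k, seq a σ (k + 1) = seq (applyStep (σ 0) a) (fun j => σ (j + 1)) k := by
  intro k
  induction k with
  | zero => rfl
  | succ k ih =>
    show applyStep (σ (k+1)) (seq a σ (k+1)) = _
    rw [ih]; rfl


lemma exists_walk : ∀ (m : ℕ) (π : Fin (m + 1) → Xi d N),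
    (∀ j : Fin m, adjXi (π j.castSucc) (π j.succ)) →
    ∃ w : (G d N).Walk (π 0) (π (Fin.last m)), ∀ v ∈ w.support, ∃ j, π j = v := by
  intro m
  induction m with
  | zero =>
    intro π _
    refine ⟨SimpleGraph.Walk.nil.copy rfl (congrArg π (by ext; simp [Fin.last])), ?_⟩
    intro v hv
    simp only [SimpleGraph.Walk.support_copy, SimpleGraph.Walk.support_nil,
      List.mem_singleton] at hv
    exact ⟨0, hv.symm⟩
  | succ m ih =>
    intro π hadj
    have hadj' : ∀ j : Fin m, adjXi ((π ∘ Fin.succ) j.castSucc) ((π ∘ Fin.succ) j.succ) := by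
      intro j
      have h := hadj j.succ
      simp only [Function.comp_apply]
      have e1 : (j.succ).castSucc = (j.castSucc).succ := by
        ext; simp
      rw [e1] at h
      exact h
    obtain ⟨w', hw'⟩ := ih (π ∘ Fin.succ) hadj'
    have h0 : adjXi (π 0) (π (Fin.succ 0)) := by
      have := hadj 0
      simpa using this
    have hend : (π ∘ Fin.succ) (Fin.last m) = π (Fin.last (m + 1)) := by
      simp [Fin.succ_last]
    by_cases he : π 0 = π (Fin.succ 0)
    · refine ⟨(w'.copy rfl hend).copy he.symm rfl, ?_⟩
      intro v hv
      simp only [SimpleGraph.Walk.support_copy] at hv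
      obtain ⟨j, hj⟩ := hw' v hv
      exact ⟨j.succ, hj⟩
    · refine ⟨(SimpleGraph.Walk.cons (And.intro h0 he : (G d N).Adj (π 0) (π (Fin.succ 0)))
        (w'.copy rfl hend)), ?_⟩
      intro v hv
      change v ∈ π 0 :: (w'.copy rfl hend).support at hv
      rcases List.mem_cons.mp hv with h | h
      · exact ⟨0, h.symm⟩
      · obtain ⟨j, hj⟩ := hw' v (by rwa [SimpleGraph.Walk.support_copy] at h)
        exact ⟨j.succ, hj⟩

lemma adjXi_disp {a b : Xi d N} (h : adjXi a b) : (∑ i, |a.1.1 i - b.1.1 i|) ≤ 2 := by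
  rcases h with ⟨h1, _⟩ | ⟨_, h2⟩
  · have : ∀ i, a.1.1 i - b.1.1 i = 0 := fun i => by rw [h1]; ring
    simp [this]
  · rw [h2.2]

lemma walk_disp {a b : Xi d N} (w : (G d N).Walk a b) :
    (∑ i, |a.1.1 i - b.1.1 i|) ≤ 2 * w.length := by
  induction w with
  | nil => simp
  | @cons a c b h w ih =>
    have tri : (∑ i, |a.1.1 i - b.1.1 i|) ≤
        (∑ i, |a.1.1 i - c.1.1 i|) + (∑ i, |c.1.1 i - b.1.1 i|) := by
      rw [← Finset.sum_add_distrib]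
      exact Finset.sum_le_sum fun i _ => abs_sub_le _ _ _
    have h1 := adjXi_disp (And.left h)
    rw [SimpleGraph.Walk.length_cons]
    push_cast
    omega

lemma exists_steps {a b : Xi d N} (w : (G d N).Walk a b) :
    ∃ σ : ℕ → Step d,
      (∀ k, k ≤ w.length → seq a σ k ∈ w.support) ∧
      (∀ v ∈ w.support, ∃ k, k ≤ w.length ∧ seq a σ k = v) := by
  induction w with
  | nil =>
    refine ⟨fun _ => default, ?_, ?_⟩
    · intro k hk
      simp only [SimpleGraph.Walk.length_nil, Nat.le_zero] at hk
      subst hk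
      simp [seq]
    · intro v hv
      simp only [SimpleGraph.Walk.support_nil, List.mem_singleton] at hv
      exact ⟨0, le_refl _, hv.symm⟩
  | @cons a c b h w ih =>
    obtain ⟨σ', h1, h2⟩ := ih
    obtain ⟨s, hs⟩ := exists_step (And.left h)
    refine ⟨fun k => Nat.casesOn k s σ', ?_, ?_⟩
    · intro k hk
      rw [SimpleGraph.Walk.support_cons]
      match k with
      | 0 => exact List.mem_cons_self
      | k + 1 =>
        rw [seq_shift]
        have : applyStep ((fun k => Nat.casesOn k s σ' : ℕ → Step d) 0) a = c := hs
        rw [this]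
        refine List.mem_cons_of_mem _ ?_
        exact h1 k (by simpa using hk)
    · intro v hv
      rw [SimpleGraph.Walk.support_cons, List.mem_cons] at hv
      rcases hv with hv | hv
      · exact ⟨0, Nat.zero_le _, hv.symm⟩
      · obtain ⟨k, hk, hke⟩ := h2 v hv
        refine ⟨k + 1, by simpa using hk, ?_⟩
        rw [seq_shift]
        have : applyStep ((fun k => Nat.casesOn k s σ' : ℕ → Step d) 0) a = c := hs
        rw [this]
        exact hke


def origin0 (d N : ℕ) : Xi d N := (originA d, 0)

def Sfin (d N : ℕ) (m : ℕ) (σ : ℕ → Step d) : Finset (Xi d N) :=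
  (Finset.range (m + 1)).image (seq (origin0 d N) σ)

def ext' (m : ℕ) (σ : Fin m → Step d) : ℕ → Step d :=
  fun j => if h : j < m then σ ⟨j, h⟩ else default

def cand (d N L : ℕ) (m : ℕ) (σ : Fin m → Step d) : Finset (Finset (Xi d N)) :=
  if L ≤ m then (Sfin d N m (ext' m σ)).powersetCard (m / 2 + 1) else ∅

lemma choose_le_two_pow (n k : ℕ) : n.choose k ≤ 2 ^ n := by
  rcases le_or_gt k n with h | h
  · calc n.choose k ≤ ∑ m ∈ Finset.range (n + 1), n.choose m :=
        Finset.single_le_sum (fun _ _ => Nat.zero_le _) (Finset.mem_range.mpr (by omega))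
      _ = 2 ^ n := Nat.sum_range_choose n
  · rw [Nat.choose_eq_zero_of_lt h]; exact Nat.zero_le _

lemma even_sum_abs_of_even_sum {v : Fin d → ℤ} (h : Even (∑ i, v i)) :
    Even (∑ i, |v i|) := by
  rw [Int.even_iff] at h ⊢
  rw [Finset.sum_int_mod] at h ⊢
  rw [← h]
  congr 1
  refine Finset.sum_congr rfl fun i _ => ?_
  rcases abs_choice (v i) with hc | hc
  · rw [hc]
  · rw [hc, Int.neg_emod_two]


lemma event_subset (d N : ℕ) (x : EvenLattice d) (n : ℕ) (hn : (n : ℤ) = ∑ i, |x.1 i|) :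
    {η : Xi d N → Bool | passageTime η x < ENNReal.ofReal (1/4 * (n : ℝ))} ⊆
      ⋃ (i : Σ m : ℕ, Fin m → Step d),
        ⋃ T ∈ cand d N (n / 2) i.1 i.2, {η : Xi d N → Bool | ∀ v ∈ T, η v = false} := by
  intro η hη
  simp only [Set.mem_setOf_eq, passageTime, iInf_lt_iff] at hη
  obtain ⟨m₀, π, h0, hl, hadj, hsum⟩ := hη
  obtain ⟨w₀, hw₀⟩ := exists_walk m₀ π hadj
  set w : (G d N).Walk (originA d, 0) (x, 0) := w₀.copy h0 hl with hw
  set q := w.bypass with hqdef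
  have hq : q.IsPath := SimpleGraph.Walk.bypass_isPath w
  have hqsupp : ∀ v ∈ q.support, ∃ j, π j = v := by
    intro v hv
    have := SimpleGraph.Walk.support_bypass_subset w hv
    rw [hw, SimpleGraph.Walk.support_copy] at this
    exact hw₀ v this
  set m := q.length with hm
  -- displacement: n ≤ 2 m
  have hdisp := walk_disp q
  have hdisp' : (n : ℤ) ≤ 2 * m := by
    rw [hn]
    refine le_trans (le_of_eq ?_) hdisp
    refine Finset.sum_congr rfl fun i _ => ?_
    show |x.1 i| = |(originA d).1 i - x.1 i|
    simp [originA]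
  have hnm : n ≤ 2 * m := by exact_mod_cast hdisp'
  obtain ⟨σ', hσ1, hσ2⟩ := exists_steps q
  set σ : Fin m → Step d := fun j => σ' j with hσdef
  have hext : ∀ k, k ≤ m → seq (origin0 d N) (ext' m σ) k = seq (origin0 d N) σ' k := by
    intro k hk
    refine seq_congr k fun j hj => ?_
    simp only [ext', hσdef]
    rw [dif_pos (by omega : j < m)]
  set S := Sfin d N m (ext' m σ) with hSdef
  have hS_mem : ∀ v, v ∈ S ↔ v ∈ q.support := by
    intro v
    simp only [hSdef, Sfin, Finset.mem_image, Finset.mem_range]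
    constructor
    · rintro ⟨k, hk, rfl⟩
      rw [hext k (by omega)]
      exact hσ1 k (by omega)
    · intro hv
      obtain ⟨k, hk, hke⟩ := hσ2 v hv
      exact ⟨k, by omega, by rw [hext k hk]; exact hke⟩
  have hScard : S.card = m + 1 := by
    have hEq : S = q.support.toFinset := by
      ext v
      rw [hS_mem v, List.mem_toFinset]
    rw [hEq, List.toFinset_card_of_nodup hq.support_nodup, SimpleGraph.Walk.length_support]
  -- counting trues
  set F := Finset.image π Finset.univ with hF
  have hsum' : ∑ i ∈ F, (if η i then 1 else 0 : ℝ≥0∞)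
      = ((F.filter fun i => η i = true).card : ℝ≥0∞) := by
    exact Finset.sum_boole (p := fun i => η i = true) (s := F)
  rw [hsum'] at hsum
  set t := (F.filter fun i => η i = true).card with ht
  have htr : (t : ℝ) < 1/4 * n := by
    have := hsum
    rw [show ((t : ℕ) : ℝ≥0∞) = ENNReal.ofReal t from (ENNReal.ofReal_natCast t).symm] at this
    exact (ENNReal.ofReal_lt_ofReal_iff_of_nonneg (Nat.cast_nonneg t)).mp this
  have ht4 : 4 * t < n := by exact_mod_cast (by linarith : (4 * t : ℝ) < (n : ℝ))
  have hSF : S ⊆ F := by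
    intro v hv
    obtain ⟨j, hj⟩ := hqsupp v ((hS_mem v).mp hv)
    exact Finset.mem_image.mpr ⟨j, Finset.mem_univ j, hj⟩
  have htS : (S.filter fun i => η i = true).card ≤ t :=
    Finset.card_le_card (Finset.filter_subset_filter _ hSF)
  have hfilt : (S.filter fun i => η i = true).card
      + (S.filter fun i => η i = false).card = m + 1 := by
    rw [← hScard]
    have : (S.filter fun i => η i = false) = (S.filter fun i => ¬ (η i = true)) := by
      refine Finset.filter_congr fun i _ => ?_
      simp
    rw [this]
    exact Finset.card_filter_add_card_filter_not _
  have hfk : m / 2 + 1 ≤ (S.filter fun i => η i = false).card := by omega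
  obtain ⟨T, hT1, hT2⟩ := Finset.exists_subset_card_eq hfk
  refine Set.mem_iUnion.mpr ⟨⟨m, σ⟩, Set.mem_iUnion₂.mpr ⟨T, ?_, ?_⟩⟩
  · simp only [cand, if_pos (show n / 2 ≤ m by omega), Finset.mem_powersetCard]
    exact ⟨hT1.trans (Finset.filter_subset _ _), hT2⟩
  · intro v hv
    exact (Finset.mem_filter.mp (hT1 hv)).2

end FPP

/-- there is `κ > 0` (depending only on `d`) such that for every `p > 1 − κ`
there are `φ, c₁, c₂ > 0` (depending only on `p` and `d`) such that, uniformly in `N ≥ 1`,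
for i.i.d. Bernoulli(`p`) site variables `η` on `Ξ = A × ℤ/Nℤ`,
`P(T(x) < φ‖x‖₁) ≤ c₁ e^{−c₂ ‖x‖₁}` for every `x ∈ A`. -/


theorem fpp_passage_time_decay (d : ℕ) (hd : 1 ≤ d) :
    ∃ κ : ℝ, 0 < κ ∧
      ∀ p : ℝ, 1 - κ < p → p ≤ 1 →
        ∃ φ c₁ c₂ : ℝ, 0 < φ ∧ 0 < c₁ ∧ 0 < c₂ ∧
          ∀ N : ℕ, 1 ≤ N →
            ∀ P : Measure ((EvenLattice d × ZMod N) → Bool), IsProbabilityMeasure P →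
              (∀ (s : Finset (EvenLattice d × ZMod N)) (b : EvenLattice d × ZMod N → Bool),
                P {η | ∀ i ∈ s, η i = b i}
                  = ∏ i ∈ s, if b i then ENNReal.ofReal p else ENNReal.ofReal (1 - p)) →
              ∀ x : EvenLattice d,
                P {η | passageTime η x
                      < ENNReal.ofReal (φ * ((∑ i, |x.1 i| : ℤ) : ℝ))}
                  ≤ ENNReal.ofReal (c₁ * Real.exp (-c₂ * ((∑ i, |x.1 i| : ℤ) : ℝ))) := by
  classical
  set Dn : ℕ := 5 ^ d + 2 with hDn
  have hDpos : (0:ℝ) < Dn := by positivity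
  refine ⟨(16 * (Dn:ℝ)^2)⁻¹, by positivity, ?_⟩
  intro p hp hp1
  refine ⟨1/4, 8, Real.log 2 / 2, by norm_num, by norm_num,
    div_pos (Real.log_pos (by norm_num)) (by norm_num), ?_⟩
  intro N hN P hP hind x
  set n : ℕ := (∑ i, |x.1 i|).toNat with hn
  have hsum_nonneg : (0:ℤ) ≤ ∑ i, |x.1 i| := Finset.sum_nonneg fun i _ => abs_nonneg _
  have hnZ : (n : ℤ) = ∑ i, |x.1 i| := Int.toNat_of_nonneg hsum_nonneg
  have hnR : ((∑ i, |x.1 i| : ℤ) : ℝ) = (n : ℝ) := by rw [← hnZ]; push_cast; ring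
  have hEvenn : Even n := by
    have h1 : Even ((n : ℤ)) := by rw [hnZ]; exact FPP.even_sum_abs_of_even_sum x.2
    exact_mod_cast h1
  set L := n / 2 with hL
  obtain ⟨r, hr⟩ := hEvenn
  have hLr : L = r := by omega
  rw [hnR]
  have hsub := FPP.event_subset d N x n hnZ
  set a := ENNReal.ofReal (1 - p) with ha
  set b := ENNReal.ofReal ((4 * (Dn:ℝ))⁻¹) with hb
  have hab : a ≤ b ^ 2 := by
    rw [hb, ← ENNReal.ofReal_pow (by positivity)]
    apply ENNReal.ofReal_le_ofReal
    have hpow : ((4 * (Dn:ℝ))⁻¹) ^ 2 = (16 * (Dn:ℝ)^2)⁻¹ := by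
      rw [inv_pow]
      congr 1
      ring
    rw [hpow]
    linarith
  have hb1 : b ≤ 1 := by
    rw [hb]
    refine ENNReal.ofReal_le_one.mpr ?_
    have hD1 : (1:ℝ) ≤ (Dn:ℝ) := by
      rw [hDn]; push_cast
      nlinarith [pow_nonneg (by norm_num : (0:ℝ) ≤ 5) d]
    have h1 : (1:ℝ) ≤ 4 * Dn := by nlinarith
    calc ((4 * (Dn:ℝ))⁻¹) ≤ 1⁻¹ := by
          apply inv_anti₀ (by norm_num) h1
      _ = 1 := by norm_num
  have h2Db : (2 * (Dn:ℝ≥0∞)) * b = 2⁻¹ := by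
    rw [hb]
    have e1 : (2 * (Dn:ℝ≥0∞)) = ENNReal.ofReal (2 * (Dn:ℝ)) := by
      rw [ENNReal.ofReal_mul (by norm_num)]
      congr 1
      · norm_num
      · exact (ENNReal.ofReal_natCast Dn).symm
    rw [e1, ← ENNReal.ofReal_mul (by positivity)]
    have e2 : (2 * (Dn:ℝ)) * (4 * (Dn:ℝ))⁻¹ = 2⁻¹ := by
      field_simp
      ring
    rw [e2, ENNReal.ofReal_inv_of_pos (by norm_num), ENNReal.ofReal_ofNat]
  have hbound : ∀ (m : ℕ) (σ : Fin m → FPP.Step d),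
      P (⋃ T ∈ FPP.cand d N L m σ, {η : FPP.Xi d N → Bool | ∀ v ∈ T, η v = false})
        ≤ if L ≤ m then (2:ℝ≥0∞)^(m+1) * a^(m/2+1) else 0 := by
    intro m σ
    by_cases hLm : L ≤ m
    · rw [if_pos hLm]
      refine le_trans (measure_biUnion_finset_le _ _) ?_
      have hPT : ∀ T ∈ FPP.cand d N L m σ,
          P {η : FPP.Xi d N → Bool | ∀ v ∈ T, η v = false} = a ^ (m/2+1) := by
        intro T hT
        rw [FPP.cand, if_pos hLm, Finset.mem_powersetCard] at hT
        have h1 := hind T (fun _ => false)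
        rw [h1]
        have h3 : ∀ i ∈ T, (if (fun _ => false : FPP.Xi d N → Bool) i then ENNReal.ofReal p
            else ENNReal.ofReal (1-p)) = a := by intro i _; simp [ha]
        rw [Finset.prod_congr rfl h3, Finset.prod_const, hT.2]
      calc ∑ T ∈ FPP.cand d N L m σ, P {η : FPP.Xi d N → Bool | ∀ v ∈ T, η v = false}
          = ∑ _T ∈ FPP.cand d N L m σ, a ^ (m/2+1) := Finset.sum_congr rfl hPT
        _ = (FPP.cand d N L m σ).card • a ^ (m/2+1) := Finset.sum_const _
        _ ≤ (2:ℝ≥0∞)^(m+1) * a^(m/2+1) := by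
            rw [nsmul_eq_mul]
            refine mul_le_mul_left ?_ _
            have hc : (FPP.cand d N L m σ).card ≤ 2^(m+1) := by
              rw [FPP.cand, if_pos hLm, Finset.card_powersetCard]
              refine le_trans (FPP.choose_le_two_pow _ _) ?_
              refine Nat.pow_le_pow_right (by norm_num) ?_
              exact le_trans Finset.card_image_le (by simp)
            calc ((FPP.cand d N L m σ).card : ℝ≥0∞) ≤ ((2^(m+1) : ℕ) : ℝ≥0∞) := by
                  exact_mod_cast hc
              _ = (2:ℝ≥0∞)^(m+1) := by push_cast; ring
    · rw [if_neg hLm]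
      have hce : FPP.cand d N L m σ = ∅ := by rw [FPP.cand, if_neg hLm]
      rw [hce]
      simp
  refine le_trans (measure_mono hsub) ?_
  refine le_trans (measure_iUnion_le _) ?_
  calc ∑' (i : Σ m : ℕ, Fin m → FPP.Step d),
        P (⋃ T ∈ FPP.cand d N L i.1 i.2, {η : FPP.Xi d N → Bool | ∀ v ∈ T, η v = false})
      = ∑' (m : ℕ), ∑' (σ : Fin m → FPP.Step d),
          P (⋃ T ∈ FPP.cand d N L m σ, {η : FPP.Xi d N → Bool | ∀ v ∈ T, η v = false}) :=
        ENNReal.tsum_sigma' _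
    _ ≤ ∑' (m : ℕ), ∑' (_σ : Fin m → FPP.Step d),
          (if L ≤ m then (2:ℝ≥0∞)^(m+1) * a^(m/2+1) else 0) :=
        ENNReal.tsum_le_tsum fun m => ENNReal.tsum_le_tsum fun σ => hbound m σ
    _ = ∑' (m : ℕ), (Fintype.card (Fin m → FPP.Step d) : ℝ≥0∞) *
          (if L ≤ m then (2:ℝ≥0∞)^(m+1) * a^(m/2+1) else 0) := by
        refine tsum_congr fun m => ?_
        rw [tsum_fintype, Finset.sum_const, nsmul_eq_mul]
        simp
    _ ≤ ∑' (m : ℕ), (if L ≤ m then 2 * (2⁻¹:ℝ≥0∞)^m else 0) := by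
        refine ENNReal.tsum_le_tsum fun m => ?_
        by_cases hLm : L ≤ m
        · rw [if_pos hLm, if_pos hLm]
          have hcards : Fintype.card (Fin m → FPP.Step d) = Dn ^ m := by
            rw [Fintype.card_fun, Fintype.card_fin]
            congr 1
            rw [hDn]
            simp [Fintype.card_sum, Fintype.card_fun, Fintype.card_fin]
          have hcard : (Fintype.card (Fin m → FPP.Step d) : ℝ≥0∞) = (Dn:ℝ≥0∞)^m := by
            rw [hcards]; push_cast; ring
          rw [hcard]
          have hak : a^(m/2+1) ≤ b^(m+1) := by
            calc a^(m/2+1) ≤ (b^2)^(m/2+1) := pow_le_pow_left₀ zero_le hab _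
              _ = b^(2*(m/2+1)) := by rw [← pow_mul]
              _ ≤ b^(m+1) := pow_le_pow_of_le_one zero_le hb1 (by omega)
          calc (Dn:ℝ≥0∞)^m * ((2:ℝ≥0∞)^(m+1) * a^(m/2+1))
              ≤ (Dn:ℝ≥0∞)^m * ((2:ℝ≥0∞)^(m+1) * b^(m+1)) := by
                exact mul_le_mul_right (mul_le_mul_right hak _) _
            _ = (2 * b) * ((2 * (Dn:ℝ≥0∞)) * b)^m := by ring
            _ = (2 * b) * (2⁻¹:ℝ≥0∞)^m := by rw [h2Db]
            _ ≤ 2 * (2⁻¹:ℝ≥0∞)^m := by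
                exact mul_le_mul_left (by simpa using mul_le_mul_right hb1 2) _
        · rw [if_neg hLm, if_neg hLm, mul_zero]
    _ = 2 * ∑' (m : ℕ), (if L ≤ m then (2⁻¹:ℝ≥0∞)^m else 0) := by
        rw [← ENNReal.tsum_mul_left]
        refine tsum_congr fun m => ?_
        by_cases hLm : L ≤ m <;> simp [hLm]
    _ = 2 * ((2⁻¹:ℝ≥0∞)^L * 2) := by
        congr 1
        have hinj : Function.Injective (fun j : ℕ => j + L) := add_left_injective L
        rw [← Function.Injective.tsum_eq hinj
          (f := fun m => if L ≤ m then (2⁻¹:ℝ≥0∞)^m else 0) ?_]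
        · calc ∑' (j : ℕ), (if L ≤ j + L then (2⁻¹:ℝ≥0∞)^(j+L) else 0)
              = ∑' (j : ℕ), (2⁻¹:ℝ≥0∞)^L * (2⁻¹)^j := by
                refine tsum_congr fun j => ?_
                rw [if_pos (by omega), pow_add]
                ring
            _ = (2⁻¹:ℝ≥0∞)^L * ∑' (j : ℕ), (2⁻¹:ℝ≥0∞)^j := ENNReal.tsum_mul_left
            _ = (2⁻¹:ℝ≥0∞)^L * 2 := by
                rw [ENNReal.tsum_geometric, ENNReal.one_sub_inv_two, inv_inv]
        · intro y hy
          have hy' := Function.mem_support.mp hy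
          have hLy : L ≤ y := by
            by_contra hc
            exact hy' (if_neg hc)
          refine ⟨y - L, ?_⟩
          show y - L + L = y
          omega
    _ ≤ ENNReal.ofReal (8 * Real.exp (-(Real.log 2 / 2) * (n:ℝ))) := by
        have hhalf : (2⁻¹:ℝ≥0∞) = ENNReal.ofReal (2⁻¹:ℝ) := by
          rw [ENNReal.ofReal_inv_of_pos (by norm_num), ENNReal.ofReal_ofNat]
        have hlhs : (2:ℝ≥0∞) * ((2⁻¹:ℝ≥0∞)^L * 2) = ENNReal.ofReal (4 * (2⁻¹:ℝ)^L) := by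
          rw [hhalf, ← ENNReal.ofReal_pow (by norm_num),
            show (2:ℝ≥0∞) = ENNReal.ofReal 2 from (ENNReal.ofReal_ofNat 2).symm,
            ← ENNReal.ofReal_mul (by positivity), ← ENNReal.ofReal_mul (by norm_num)]
          congr 1
          ring
        rw [hlhs]
        apply ENNReal.ofReal_le_ofReal
        have hexp : Real.exp (-(Real.log 2 / 2) * (n:ℝ)) = (2⁻¹:ℝ)^L := by
          have hnr2 : (n : ℝ) = 2 * (r : ℝ) := by
            rw [hr]; push_cast; ring
          rw [hnr2, show -(Real.log 2 / 2) * (2 * (r:ℝ)) = (r:ℝ) * (-Real.log 2) by ring,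
            Real.exp_nat_mul, Real.exp_neg, Real.exp_log (by norm_num : (0:ℝ) < 2), hLr]
        rw [hexp]
        have hpnn : (0:ℝ) ≤ (2⁻¹:ℝ)^L := by positivity
        linarith
end
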